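/- Let n ≥ 1, let q be an integer with 0 ≤ q ≤ |n|−1, and let T = {0,…,⌊n/2^{q+1}⌋} × {0,…,2^q−1}. A vector x ∈ ℝ^n lies in PP(n,q) if and only if there exist reals (w_{t,r})_{(t,r)∈T} and (z_{t,r,i})_{(t,r)∈T, i∈[n]} such that: Σ_{(t,r)∈T} w_{t,r} = 1; 0 ≤ w_{t,r} ≤ 1 for each (t,r) ∈ T; Σ_{(t,r)∈T} z_{t,r,i} = x_i for each i ∈ [n]; Σ_{i∈[n]} z_{t,r,i} = (2^q(2t+1)+r)·w_{t,r} for each (t,r) ∈ T; and 0 ≤ z_{t,r,i} ≤ w_{t,r} for each (t,r) ∈ T and i ∈ [n]. -/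

import Mathlib

open Finset


/-- The truncated parity polytope `PP(n,q)`: the convex hull of the 0/1 vectors of
length `n` with `⌊2^{-q} Σ x_k⌋` odd. -/
def truncParityPolytope (n q : ℕ) : Set (Fin n → ℝ) :=
  convexHull ℝ
    {x : Fin n → ℝ |
      (∀ k, x k = 0 ∨ x k = 1) ∧ ∃ s : ℕ, (∑ k, x k) = (s : ℝ) ∧ Odd (s / 2 ^ q)}

/-- Hypersimplex integrality: a point of `[0,1]^n` with coordinate sum equal to a natural
number `m` lies in the convex hull of the 0/1 vectors with coordinate sum `m`. -/
lemma mem_hull_of_sum_eq {n : ℕ} (m : ℕ) (y : Fin n → ℝ)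
    (h0 : ∀ i, 0 ≤ y i) (h1 : ∀ i, y i ≤ 1) (hs : ∑ i, y i = (m : ℝ)) :
    y ∈ convexHull ℝ {v : Fin n → ℝ | (∀ k, v k = 0 ∨ v k = 1) ∧ ∑ k, v k = (m : ℝ)} := by
  classical
  -- induction on the number of fractional coordinates
  suffices H : ∀ d (y : Fin n → ℝ), (univ.filter fun i => y i ≠ 0 ∧ y i ≠ 1).card ≤ d →
      (∀ i, 0 ≤ y i) → (∀ i, y i ≤ 1) → (∑ i, y i = (m : ℝ)) →
      y ∈ convexHull ℝ {v : Fin n → ℝ | (∀ k, v k = 0 ∨ v k = 1) ∧ ∑ k, v k = (m : ℝ)} by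
    exact H _ y le_rfl h0 h1 hs
  intro d
  induction d with
  | zero =>
    intro y hc h0 h1 hs
    refine subset_convexHull ℝ _ ⟨fun k => ?_, hs⟩
    by_contra hk
    push_neg at hk
    have : k ∈ univ.filter fun i => y i ≠ 0 ∧ y i ≠ 1 := by
      simp [hk.1, hk.2]
    have he : (univ.filter fun i => y i ≠ 0 ∧ y i ≠ 1) = ∅ :=
      Finset.card_eq_zero.mp (Nat.le_zero.mp hc)
    rw [he] at this
    exact absurd this (Finset.notMem_empty k)
  | succ d ih =>
    intro y hc h0 h1 hs
    by_cases hF : (univ.filter fun i => y i ≠ 0 ∧ y i ≠ 1) = ∅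
    · exact ih y (by simp [hF]) h0 h1 hs
    -- pick a fractional coordinate i
    obtain ⟨i, hi⟩ := nonempty_of_ne_empty hF
    rw [mem_filter] at hi
    -- there is a second fractional coordinate j ≠ i
    have hj : ∃ j, j ≠ i ∧ y j ≠ 0 ∧ y j ≠ 1 := by
      by_contra hco
      push_neg at hco
      -- then all other coordinates are 0 or 1, so y i = m - integer, contradiction
      have key : ∀ j ∈ univ.erase i, y j = (if y j = 1 then (1:ℝ) else 0) := by
        intro j hj
        have hne := (Finset.mem_erase.mp hj).1
        rcases eq_or_ne (y j) 0 with h | h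
        · rw [if_neg (by rw [h]; norm_num), h]
        · simp [hco j hne h]
      have hsum : ∑ j ∈ univ.erase i, y j =
          ((univ.erase i).filter fun j => y j = 1).card := by
        rw [Finset.sum_congr rfl key]
        simp [Finset.sum_boole]
      have hyi : y i = (m : ℝ) - ((univ.erase i).filter fun j => y j = 1).card := by
        have : y i + ∑ j ∈ univ.erase i, y j = (m:ℝ) := by
          rw [← Finset.add_sum_erase _ _ (mem_univ i)] at hs; exact hs
        rw [hsum] at this; linarith
      set c : ℕ := ((univ.erase i).filter fun j => y j = 1).card
      have hlt : 0 < y i := lt_of_le_of_ne (h0 i) (Ne.symm hi.2.1)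
      have hlt1 : y i < 1 := lt_of_le_of_ne (h1 i) hi.2.2
      have h1' : (0:ℝ) < (m:ℝ) - c := by rw [← hyi]; exact hlt
      have h2' : (m:ℝ) - c < 1 := by rw [← hyi]; exact hlt1
      have : (c:ℝ) < (m:ℝ) := by linarith
      have hcm : c < m := by exact_mod_cast this
      have : (m:ℝ) < c + 1 := by linarith
      have : m < c + 1 := by exact_mod_cast this
      omega
    obtain ⟨j, hji, hj0, hj1⟩ := hj
    have hyi0 : 0 < y i := lt_of_le_of_ne (h0 i) (Ne.symm hi.2.1)
    have hyi1 : y i < 1 := lt_of_le_of_ne (h1 i) hi.2.2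
    have hyj0 : 0 < y j := lt_of_le_of_ne (h0 j) (Ne.symm hj0)
    have hyj1 : y j < 1 := lt_of_le_of_ne (h1 j) hj1
    set a : ℝ := min (1 - y i) (y j) with ha_def
    set b : ℝ := min (y i) (1 - y j) with hb_def
    have ha : 0 < a := lt_min (by linarith) hyj0
    have hb : 0 < b := lt_min hyi0 (by linarith)
    set dvec : Fin n → ℝ := fun k => (if k = i then (1:ℝ) else 0) - (if k = j then 1 else 0)
      with hdvec
    have hdsum : ∑ k, dvec k = 0 := by
      simp [hdvec, Finset.sum_sub_distrib, Finset.sum_ite_eq']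
    set yp : Fin n → ℝ := y + a • dvec with hyp
    set ym : Fin n → ℝ := y - b • dvec with hym
    have hypk : ∀ k, k ≠ i → k ≠ j → yp k = y k := by
      intro k hk1 hk2; simp [hyp, hdvec, hk1, hk2]
    have hymk : ∀ k, k ≠ i → k ≠ j → ym k = y k := by
      intro k hk1 hk2; simp [hym, hdvec, hk1, hk2]
    have hypi : yp i = y i + a := by simp [hyp, hdvec, (Ne.symm hji)]
    have hypj : yp j = y j - a := by simp [hyp, hdvec, hji, sub_eq_add_neg]
    have hymi : ym i = y i - b := by simp [hym, hdvec, (Ne.symm hji)]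
    have hymj : ym j = y j + b := by simp [hym, hdvec, hji]
    have ha1 : a ≤ 1 - y i := min_le_left _ _
    have ha2 : a ≤ y j := min_le_right _ _
    have hb1 : b ≤ y i := min_le_left _ _
    have hb2 : b ≤ 1 - y j := min_le_right _ _
    -- bounds for yp
    have hyp0 : ∀ k, 0 ≤ yp k := by
      intro k
      rcases eq_or_ne k i with rfl | hk1
      · rw [hypi]; linarith
      rcases eq_or_ne k j with rfl | hk2
      · rw [hypj]; linarith
      · rw [hypk k hk1 hk2]; exact h0 k
    have hyp1 : ∀ k, yp k ≤ 1 := by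
      intro k
      rcases eq_or_ne k i with rfl | hk1
      · rw [hypi]; linarith
      rcases eq_or_ne k j with rfl | hk2
      · rw [hypj]; linarith
      · rw [hypk k hk1 hk2]; exact h1 k
    have hym0 : ∀ k, 0 ≤ ym k := by
      intro k
      rcases eq_or_ne k i with rfl | hk1
      · rw [hymi]; linarith
      rcases eq_or_ne k j with rfl | hk2
      · rw [hymj]; linarith
      · rw [hymk k hk1 hk2]; exact h0 k
    have hym1 : ∀ k, ym k ≤ 1 := by
      intro k
      rcases eq_or_ne k i with rfl | hk1
      · rw [hymi]; linarith
      rcases eq_or_ne k j with rfl | hk2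
      · rw [hymj]; linarith
      · rw [hymk k hk1 hk2]; exact h1 k
    have hyps : ∑ k, yp k = (m:ℝ) := by
      simp only [hyp, Pi.add_apply, Pi.smul_apply, smul_eq_mul, Finset.sum_add_distrib,
        ← Finset.mul_sum, hdsum, hs]; ring
    have hyms : ∑ k, ym k = (m:ℝ) := by
      simp only [hym, Pi.sub_apply, Pi.smul_apply, smul_eq_mul, Finset.sum_sub_distrib,
        ← Finset.mul_sum, hdsum, hs]; ring
    -- fractional sets shrink
    have hsubp : (univ.filter fun k => yp k ≠ 0 ∧ yp k ≠ 1) ⊆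
        (univ.filter fun k => y k ≠ 0 ∧ y k ≠ 1) := by
      intro k hk
      rw [mem_filter] at hk ⊢
      refine ⟨mem_univ _, ?_⟩
      rcases eq_or_ne k i with rfl | hk1
      · exact hi.2
      rcases eq_or_ne k j with rfl | hk2
      · exact ⟨hj0, hj1⟩
      · rw [hypk k hk1 hk2] at hk; exact hk.2
    have hsubm : (univ.filter fun k => ym k ≠ 0 ∧ ym k ≠ 1) ⊆
        (univ.filter fun k => y k ≠ 0 ∧ y k ≠ 1) := by
      intro k hk
      rw [mem_filter] at hk ⊢
      refine ⟨mem_univ _, ?_⟩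
      rcases eq_or_ne k i with rfl | hk1
      · exact hi.2
      rcases eq_or_ne k j with rfl | hk2
      · exact ⟨hj0, hj1⟩
      · rw [hymk k hk1 hk2] at hk; exact hk.2
    -- strictness: yp kills i or j
    have hstrictp : ∃ k, k ∈ (univ.filter fun k => y k ≠ 0 ∧ y k ≠ 1) ∧
        k ∉ (univ.filter fun k => yp k ≠ 0 ∧ yp k ≠ 1) := by
      rcases min_cases (1 - y i) (y j) with ⟨hmin, _⟩ | ⟨hmin, _⟩
      · have h1 : yp i = 1 := by rw [hypi, ha_def, hmin]; ring
        exact ⟨i, by simpa using hi.2, by simp [h1]⟩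
      · have h1 : yp j = 0 := by rw [hypj, ha_def, hmin]; ring
        exact ⟨j, by simp [hj0, hj1], by simp [h1]⟩
    have hstrictm : ∃ k, k ∈ (univ.filter fun k => y k ≠ 0 ∧ y k ≠ 1) ∧
        k ∉ (univ.filter fun k => ym k ≠ 0 ∧ ym k ≠ 1) := by
      rcases min_cases (y i) (1 - y j) with ⟨hmin, _⟩ | ⟨hmin, _⟩
      · have h1 : ym i = 0 := by rw [hymi, hb_def, hmin]; ring
        exact ⟨i, by simpa using hi.2, by simp [h1]⟩
      · have h1 : ym j = 1 := by rw [hymj, hb_def, hmin]; ring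
        exact ⟨j, by simp [hj0, hj1], by simp [h1]⟩
    have hcp : (univ.filter fun k => yp k ≠ 0 ∧ yp k ≠ 1).card ≤ d := by
      obtain ⟨k, hk1, hk2⟩ := hstrictp
      have := Finset.card_lt_card (Finset.ssubset_iff_of_subset hsubp |>.mpr ⟨k, hk1, hk2⟩)
      omega
    have hcm' : (univ.filter fun k => ym k ≠ 0 ∧ ym k ≠ 1).card ≤ d := by
      obtain ⟨k, hk1, hk2⟩ := hstrictm
      have := Finset.card_lt_card (Finset.ssubset_iff_of_subset hsubm |>.mpr ⟨k, hk1, hk2⟩)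
      omega
    have hp := ih yp hcp hyp0 hyp1 hyps
    have hm := ih ym hcm' hym0 hym1 hyms
    have hconv := convex_convexHull ℝ
      {v : Fin n → ℝ | (∀ k, v k = 0 ∨ v k = 1) ∧ ∑ k, v k = (m : ℝ)}
    have hab0 : (0:ℝ) < a + b := by linarith
    have hab : b / (a + b) + a / (a + b) = 1 := by
      rw [← add_div, add_comm b a, div_self hab0.ne']
    have := hconv hp hm (by positivity : (0:ℝ) ≤ b / (a+b)) (by positivity : (0:ℝ) ≤ a / (a+b)) hab
    convert this using 1
    funext k
    simp only [Pi.add_apply, Pi.smul_apply, smul_eq_mul, hyp, hym, Pi.sub_apply]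
    field_simp
    ring


/-- the lift of the truncated parity polytope.  With
`T = {0,…,⌊n/2^{q+1}⌋} × {0,…,2^q-1}`, a vector `x ∈ ℝ^n` lies in `PP(n,q)` iff there
are reals `(w_{t,r})` and `(z_{t,r,i})` with `Σ w_{t,r} = 1`, `0 ≤ w_{t,r} ≤ 1`,
`Σ_{(t,r)} z_{t,r,i} = x_i`, `Σ_i z_{t,r,i} = (2^q(2t+1)+r) w_{t,r}` and
`0 ≤ z_{t,r,i} ≤ w_{t,r}`. -/
theorem statement5 (n q : ℕ) (hn : 1 ≤ n) (hq : q ≤ Nat.size n - 1) (x : Fin n → ℝ) :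
    x ∈ truncParityPolytope n q ↔
      ∃ (w : Fin (n / 2 ^ (q + 1) + 1) × Fin (2 ^ q) → ℝ)
        (z : Fin (n / 2 ^ (q + 1) + 1) × Fin (2 ^ q) → Fin n → ℝ),
        (∑ p, w p = 1) ∧
        (∀ p, 0 ≤ w p ∧ w p ≤ 1) ∧
        (∀ i, ∑ p, z p i = x i) ∧
        (∀ p, ∑ i, z p i = ((2 ^ q * (2 * (p.1 : ℕ) + 1) + (p.2 : ℕ) : ℕ) : ℝ) * w p) ∧
        (∀ p i, 0 ≤ z p i ∧ z p i ≤ w p) := by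
  classical
  have h2qpos : 0 < 2 ^ q := Nat.pow_pos (by norm_num)
  have hsz : 0 < n.size := Nat.size_pos.mpr hn
  have h2q : 2 ^ q ≤ n := by
    have h1 : 2 ^ q ≤ 2 ^ (n.size - 1) := Nat.pow_le_pow_right (by norm_num) hq
    have h2 : 2 ^ (n.size - 1) ≤ n := by
      by_contra h
      push_neg at h
      have := Nat.size_le.mpr h
      omega
    omega
  set S : Set (Fin n → ℝ) :=
    {v : Fin n → ℝ | (∀ k, v k = 0 ∨ v k = 1) ∧ ∃ s : ℕ, (∑ k, v k) = (s : ℝ) ∧ Odd (s / 2 ^ q)}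
    with hS
  constructor
  · -- forward direction
    intro hx
    rw [truncParityPolytope, _root_.convexHull_eq] at hx
    obtain ⟨ι, t, c, zf, hc0, hc1, hzS, hcm⟩ := hx
    have hx' : ∀ j, ∑ i ∈ t, c i * zf i j = x j := by
      rw [Finset.centerMass_eq_of_sum_1 t zf hc1] at hcm
      intro j
      rw [← hcm]
      simp [Finset.sum_apply]
    set sN : ι → ℕ := fun i => ⌊∑ k, zf i k⌋₊ with hsN_def
    have hsN : ∀ i ∈ t, ((sN i : ℝ) = ∑ k, zf i k) ∧ Odd (sN i / 2 ^ q) ∧ sN i ≤ n := by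
      intro i hi
      obtain ⟨hz01, s, hsum, hodd⟩ := hzS i hi
      have hfl : sN i = s := by rw [hsN_def]; simp [hsum]
      have hle : (s : ℝ) ≤ n := by
        rw [← hsum]
        calc ∑ k, zf i k ≤ ∑ _k : Fin n, (1:ℝ) := by
              apply Finset.sum_le_sum
              intro k _
              rcases hz01 k with h | h <;> rw [h] <;> norm_num
          _ = n := by simp
      refine ⟨by rw [hfl, hsum], by rw [hfl]; exact hodd, ?_⟩
      rw [hfl]; exact_mod_cast hle
    set φ : ι → Fin (n / 2 ^ (q + 1) + 1) × Fin (2 ^ q) := fun i =>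
      (⟨min (sN i / 2 ^ (q + 1)) (n / 2 ^ (q + 1)), Nat.lt_succ_of_le (min_le_right _ _)⟩,
       ⟨sN i % 2 ^ q, Nat.mod_lt _ h2qpos⟩) with hφ
    have hkey : ∀ i ∈ t, ∀ p, φ i = p → 2 ^ q * (2 * (p.1 : ℕ) + 1) + (p.2 : ℕ) = sN i := by
      intro i hi p hp
      obtain ⟨_, hodd, hle⟩ := hsN i hi
      subst hp
      have hmin : min (sN i / 2 ^ (q + 1)) (n / 2 ^ (q + 1)) = sN i / 2 ^ (q + 1) :=
        min_eq_left (Nat.div_le_div_right hle)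
      simp only [hφ, hmin]
      obtain ⟨u, hu⟩ := hodd
      have h1 : 2 ^ q * (sN i / 2 ^ q) + sN i % 2 ^ q = sN i := Nat.div_add_mod _ _
      have h2 : sN i / 2 ^ (q + 1) = (sN i / 2 ^ q) / 2 := by
        rw [pow_succ, Nat.div_div_eq_div_mul]
      have h3 : (sN i / 2 ^ q) / 2 = u := by omega
      rw [h2, h3]
      rw [hu] at h1
      exact h1
    refine ⟨fun p => ∑ i ∈ t.filter (fun i => φ i = p), c i,
            fun p j => ∑ i ∈ t.filter (fun i => φ i = p), c i * zf i j, ?_, ?_, ?_, ?_, ?_⟩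
    · rw [Finset.sum_fiberwise t φ c, hc1]
    · intro p
      have h0 : ∀ p', 0 ≤ ∑ i ∈ t.filter (fun i => φ i = p'), c i := fun p' =>
        Finset.sum_nonneg fun i hi => hc0 i (Finset.mem_of_mem_filter i hi)
      refine ⟨h0 p, ?_⟩
      calc ∑ i ∈ t.filter (fun i => φ i = p), c i
          ≤ ∑ p', ∑ i ∈ t.filter (fun i => φ i = p'), c i :=
            Finset.single_le_sum (fun p' _ => h0 p') (Finset.mem_univ p)
        _ = 1 := by rw [Finset.sum_fiberwise t φ c, hc1]
    · intro j
      rw [Finset.sum_fiberwise t φ (fun i => c i * zf i j)]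
      exact hx' j
    · intro p
      rw [Finset.sum_comm]
      have : ∀ i ∈ t.filter (fun i => φ i = p),
          ∑ j, c i * zf i j = ((2 ^ q * (2 * (p.1 : ℕ) + 1) + (p.2 : ℕ) : ℕ) : ℝ) * c i := by
        intro i hi
        obtain ⟨hit, hip⟩ := Finset.mem_filter.mp hi
        rw [← Finset.mul_sum, ← (hsN i hit).1, hkey i hit p hip]
        ring
      rw [Finset.sum_congr rfl this, ← Finset.mul_sum]
    · intro p j
      constructor
      · apply Finset.sum_nonneg
        intro i hi
        obtain ⟨hit, _⟩ := Finset.mem_filter.mp hi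
        obtain ⟨hz01, _⟩ := hzS i hit
        apply mul_nonneg (hc0 i hit)
        rcases hz01 j with h | h <;> rw [h] <;> norm_num
      · apply Finset.sum_le_sum
        intro i hi
        obtain ⟨hit, _⟩ := Finset.mem_filter.mp hi
        obtain ⟨hz01, _⟩ := hzS i hit
        calc c i * zf i j ≤ c i * 1 := by
              apply mul_le_mul_of_nonneg_left _ (hc0 i hit)
              rcases hz01 j with h | h <;> rw [h] <;> norm_num
          _ = c i := mul_one _
  · -- backward direction
    rintro ⟨w, z, hw1, hw01, hzx, hzs, hz01⟩
    rw [truncParityPolytope, ← hS]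
    -- base point: indicator of the first 2^q coordinates
    set y0 : Fin n → ℝ := fun k => if (k : ℕ) < 2 ^ q then 1 else 0 with hy0_def
    have hy0sum : ∑ k, y0 k = ((2 ^ q : ℕ) : ℝ) := by
      rw [hy0_def]
      rw [Fin.sum_univ_eq_sum_range (fun k => if k < 2 ^ q then (1:ℝ) else 0) n]
      rw [Finset.range_eq_Ico, ← Finset.sum_Ico_consecutive _ (Nat.zero_le (2 ^ q)) h2q,
        ← Finset.range_eq_Ico]
      have e1 : ∑ k ∈ Finset.range (2 ^ q), (if k < 2 ^ q then (1:ℝ) else 0) = 2 ^ q := by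
        rw [Finset.sum_congr rfl (fun k hk => if_pos (Finset.mem_range.mp hk))]
        simp
      have e2 : ∑ k ∈ Finset.Ico (2 ^ q) n, (if k < 2 ^ q then (1:ℝ) else 0) = 0 := by
        apply Finset.sum_eq_zero
        intro k hk
        rw [if_neg (not_lt.mpr (Finset.mem_Ico.mp hk).1)]
      rw [e1, e2]
      push_cast
      ring
    have hy0 : y0 ∈ S := by
      refine ⟨fun k => ?_, 2 ^ q, hy0sum, ?_⟩
      · rw [hy0_def]
        by_cases h : (k : ℕ) < 2 ^ q <;> simp [h]
      · rw [Nat.div_self h2qpos]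
        exact odd_one
    set yy : Fin (n / 2 ^ (q + 1) + 1) × Fin (2 ^ q) → Fin n → ℝ := fun p =>
      if w p = 0 then y0 else (w p)⁻¹ • z p with hyy
    have hmem : ∀ p, yy p ∈ convexHull ℝ S := by
      intro p
      show (if w p = 0 then y0 else (w p)⁻¹ • z p) ∈ convexHull ℝ S
      by_cases h : w p = 0
      · rw [if_pos h]
        exact subset_convexHull ℝ S hy0
      · rw [if_neg h]
        have hwpos : 0 < w p := lt_of_le_of_ne (hw01 p).1 (Ne.symm h)
        set m : ℕ := 2 ^ q * (2 * (p.1 : ℕ) + 1) + (p.2 : ℕ) with hm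
        have hsub : {v : Fin n → ℝ | (∀ k, v k = 0 ∨ v k = 1) ∧ ∑ k, v k = (m : ℝ)} ⊆ S := by
          intro v ⟨hv01, hvs⟩
          refine ⟨hv01, m, hvs, ?_⟩
          have : m / 2 ^ q = 2 * (p.1 : ℕ) + 1 := by
            rw [hm, Nat.mul_add_div h2qpos, Nat.div_eq_of_lt p.2.isLt, Nat.add_zero]
          rw [this]
          exact ⟨(p.1 : ℕ), by ring⟩
        apply convexHull_mono hsub
        apply mem_hull_of_sum_eq m
        · intro i
          exact mul_nonneg (inv_nonneg.mpr hwpos.le) (hz01 p i).1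
        · intro i
          have := (hz01 p i).2
          calc (w p)⁻¹ • z p i ≤ (w p)⁻¹ * w p := by
                simp only [smul_eq_mul]
                exact mul_le_mul_of_nonneg_left this (inv_nonneg.mpr hwpos.le)
            _ = 1 := inv_mul_cancel₀ h
        · simp only [Pi.smul_apply, smul_eq_mul, ← Finset.mul_sum]
          rw [hzs p, ← hm]
          field_simp
    have hxeq : x = ∑ p, w p • yy p := by
      funext j
      rw [Finset.sum_apply, ← hzx j]
      apply Finset.sum_congr rfl
      intro p _
      by_cases h : w p = 0
      · have hz : z p j = 0 := le_antisymm (h ▸ (hz01 p j).2) (hz01 p j).1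
        simp [hyy, h, hz]
      · simp only [hyy, if_neg h, Pi.smul_apply, smul_eq_mul]
        field_simp
    rw [hxeq]
    exact (convex_convexHull ℝ S).sum_mem (fun p _ => (hw01 p).1) hw1 (fun p _ => hmem p)
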